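/- Let H ≥ 1, p ≥ 1, Γ ∈ ℝ^{H×p×p}, and α, λ, γ ≥ 0. Consider minimizing over Ω ∈ ℝ^{H×p×p} the function (1/2)Σ_{h,j,k}(Ω_{hjk} − Γ_{hjk})² + αλ Σ_{h=1}^H Σ_{j≠k} |Ω_{hjk}| + αγ Σ_{j≠k} ‖Ω_{·jk}‖₂, where Ω_{·jk} = (Ω_{1jk},…,Ω_{Hjk})ᵀ ∈ ℝ^H. This problem has a unique minimizer Ω*, whose fibers satisfy: Ω*_{·jj} = Γ_{·jj} for every j, and for j ≠ k, Ω*_{·jk} = (1 − αγ/‖soft(Γ_{·jk}, αλ)‖₂)₊ · soft(Γ_{·jk}, αλ) when soft(Γ_{·jk}, αλ) ≠ 0, and Ω*_{·jk} = 0 otherwise, where soft(y, τ)_h = max(|y_h| − τ, 0)·sign(y_h) componentwise and (t)₊ = max(t, 0). -/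

import Mathlib

open Finset

noncomputable def fibObj (H : ℕ) (y : Fin H → ℝ) (τ κ : ℝ) (x : Fin H → ℝ) : ℝ :=
  (1/2) * ∑ h, (x h - y h)^2 + τ * ∑ h, |x h| + κ * Real.sqrt (∑ h, (x h)^2)

noncomputable def sfn (H : ℕ) (y : Fin H → ℝ) (τ : ℝ) : Fin H → ℝ :=
  fun h => max (|y h| - τ) 0 * Real.sign (y h)

noncomputable def solu (H : ℕ) (y : Fin H → ℝ) (τ κ : ℝ) : Fin H → ℝ :=
  fun h => max (1 - κ / Real.sqrt (∑ i, (sfn H y τ i)^2)) 0 * sfn H y τ h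

lemma fib_gap {H : ℕ} (y xs u v : Fin H → ℝ) (τ κ : ℝ) (hτ : 0 ≤ τ) (hκ : 0 ≤ κ)
    (hu : ∀ h, |u h| ≤ 1) (hv : ∑ h, (v h)^2 ≤ 1)
    (hux : τ * ∑ h, u h * xs h = τ * ∑ h, |xs h|)
    (hvx : κ * ∑ h, v h * xs h = κ * Real.sqrt (∑ h, (xs h)^2))
    (hy : ∀ h, y h = xs h + τ * u h + κ * v h)
    (x : Fin H → ℝ) :
    fibObj H y τ κ xs + (1/2) * ∑ h, (x h - xs h)^2 ≤ fibObj H y τ κ x := by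
  have E : ∑ h, (1/2) * (x h - y h)^2
      = ∑ h, ((1/2)*(xs h - y h)^2 + (1/2)*(x h - xs h)^2
          + τ*(u h * xs h) - τ*(u h * x h) + κ*(v h * xs h) - κ*(v h * x h)) := by
    refine Finset.sum_congr rfl fun h _ => ?_
    rw [hy h]; ring
  have hA : ∀ h, u h * x h ≤ |x h| := by
    intro h
    calc u h * x h ≤ |u h * x h| := le_abs_self _
    _ = |u h| * |x h| := abs_mul _ _
    _ ≤ 1 * |x h| := by
        exact mul_le_mul_of_nonneg_right (hu h) (abs_nonneg _)
    _ = |x h| := one_mul _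
  have hB : ∑ h, v h * x h ≤ Real.sqrt (∑ h, (x h)^2) := by
    calc ∑ h, v h * x h ≤ |∑ h, v h * x h| := le_abs_self _
    _ = Real.sqrt ((∑ h, v h * x h)^2) := (Real.sqrt_sq_eq_abs _).symm
    _ ≤ Real.sqrt ((∑ h, (v h)^2) * ∑ h, (x h)^2) :=
        Real.sqrt_le_sqrt (Finset.sum_mul_sq_le_sq_mul_sq _ _ _)
    _ ≤ Real.sqrt (1 * ∑ h, (x h)^2) := by
        apply Real.sqrt_le_sqrt
        apply mul_le_mul_of_nonneg_right hv
        exact Finset.sum_nonneg fun h _ => sq_nonneg _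
    _ = Real.sqrt (∑ h, (x h)^2) := by rw [one_mul]
  have hAs : τ * ∑ h, u h * x h ≤ τ * ∑ h, |x h| :=
    mul_le_mul_of_nonneg_left (Finset.sum_le_sum fun h _ => hA h) hτ
  have hBs : κ * ∑ h, v h * x h ≤ κ * Real.sqrt (∑ h, (x h)^2) :=
    mul_le_mul_of_nonneg_left hB hκ
  simp only [fibObj, Finset.mul_sum] at *
  rw [E]
  simp only [Finset.sum_add_distrib, Finset.sum_sub_distrib]
  linarith

lemma sign_helpers {r : ℝ} (hr : r ≠ 0) : |Real.sign r| = 1 ∧ Real.sign r * Real.sign r = 1 := by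
  rcases Real.sign_apply_eq_of_ne_zero r hr with h | h <;> rw [h] <;> norm_num

lemma y_sub_s {H : ℕ} (y : Fin H → ℝ) (τ : ℝ) (hτ : 0 ≤ τ) (h : Fin H) :
    y h - sfn H y τ h = if τ < |y h| then τ * Real.sign (y h) else y h := by
  unfold sfn
  by_cases hc : τ < |y h|
  · have hy0 : y h ≠ 0 := by
      intro h0; rw [h0] at hc; simp at hc; linarith
    rw [if_pos hc, max_eq_left (by linarith)]
    rcases lt_trichotomy (y h) 0 with hlt | heq | hgt
    · rw [Real.sign_of_neg hlt, abs_of_neg hlt]; ring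
    · exact absurd heq hy0
    · rw [Real.sign_of_pos hgt, abs_of_pos hgt]; ring
  · rw [if_neg hc, max_eq_right (by push_neg at hc; linarith)]; ring

lemma sfn_eq_zero_of_le {H : ℕ} (y : Fin H → ℝ) (τ : ℝ) (h : Fin H) (hle : |y h| ≤ τ) :
    sfn H y τ h = 0 := by
  unfold sfn; rw [max_eq_right (by linarith)]; ring

lemma sfn_ne_zero {H : ℕ} (y : Fin H → ℝ) (τ : ℝ) (h : Fin H) (hne : sfn H y τ h ≠ 0) :
    τ < |y h| := by
  by_contra hc; push_neg at hc; exact hne (sfn_eq_zero_of_le y τ h hc)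

lemma fiber_min {H : ℕ} (y : Fin H → ℝ) (τ κ : ℝ) (hτ : 0 ≤ τ) (hκ : 0 ≤ κ)
    (x : Fin H → ℝ) :
    fibObj H y τ κ (solu H y τ κ) + (1/2) * ∑ h, (x h - solu H y τ κ h)^2
      ≤ fibObj H y τ κ x := by
  set s : Fin H → ℝ := sfn H y τ with hs
  set ns : ℝ := Real.sqrt (∑ i, (s i)^2) with hns
  have hns0 : 0 ≤ ns := Real.sqrt_nonneg _
  have hnssq : ns^2 = ∑ i, (s i)^2 := Real.sq_sqrt (Finset.sum_nonneg fun i _ => sq_nonneg _)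
  have hszero : ns = 0 → ∀ h, s h = 0 := by
    intro h0 h
    have : ∑ i, (s i)^2 = 0 := by rw [← hnssq, h0]; ring
    have := (Finset.sum_eq_zero_iff_of_nonneg (fun i _ => sq_nonneg (s i))).mp this h (Finset.mem_univ h)
    exact pow_eq_zero_iff (by norm_num) |>.mp this
  set c : ℝ := max (1 - κ / ns) 0 with hc
  have hc0 : 0 ≤ c := le_max_right _ _
  have hxs : solu H y τ κ = fun h => c * s h := rfl
  set u : Fin H → ℝ := fun h => if τ = 0 then 0 else (y h - s h) / τ with hu_def
  set v : Fin H → ℝ := fun h => s h / max ns κ with hv_def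
  -- |u h| ≤ 1
  have hu : ∀ h, |u h| ≤ 1 := by
    intro h
    simp only [hu_def]
    by_cases h0 : τ = 0
    · simp [h0]
    · rw [if_neg h0]
      have hτpos : 0 < τ := lt_of_le_of_ne hτ (Ne.symm h0)
      rw [abs_div, abs_of_pos hτpos, div_le_one hτpos]
      rw [y_sub_s y τ hτ h]
      by_cases hc2 : τ < |y h|
      · rw [if_pos hc2, abs_mul, abs_of_pos hτpos,
          (sign_helpers (by intro h0'; rw [h0'] at hc2; simp at hc2; linarith)).1, mul_one]
      · rw [if_neg hc2]; push_neg at hc2; exact hc2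
  -- τ * u h = y h - s h
  have hτu : ∀ h, τ * u h = y h - s h := by
    intro h
    simp only [hu_def]
    by_cases h0 : τ = 0
    · rw [if_pos h0, h0, zero_mul]
      have : s h = y h := by
        simp only [hs, sfn, h0, sub_zero, max_eq_left (abs_nonneg (y h))]
        rcases lt_trichotomy (y h) 0 with hlt | heq | hgt
        · rw [Real.sign_of_neg hlt, abs_of_neg hlt]; ring
        · rw [heq]; simp
        · rw [Real.sign_of_pos hgt, abs_of_pos hgt]; ring
      rw [this]; ring
    · rw [if_neg h0]; field_simp
  -- the decomposition y = xs + τu + κv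
  have hy : ∀ h, y h = c * s h + τ * u h + κ * v h := by
    intro h
    rw [hτu h]
    simp only [hv_def]
    by_cases hsh : s h = 0
    · rw [hsh]; simp
    · have hnspos : 0 < ns := by
        rcases lt_or_eq_of_le hns0 with h' | h'
        · exact h'
        · exact absurd (hszero h'.symm h) hsh
      by_cases hκns : κ ≤ ns
      · have hmax : max ns κ = ns := max_eq_left hκns
        have hcval : c = 1 - κ / ns := by
          rw [hc]; apply max_eq_left
          rw [sub_nonneg, div_le_one hnspos]; exact hκns
        rw [hmax, hcval]; field_simp; ring
      · push_neg at hκns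
        have hmax : max ns κ = κ := max_eq_right (le_of_lt hκns)
        have hcval : c = 0 := by
          rw [hc]; apply max_eq_right
          rw [sub_nonpos, le_div_iff₀ hnspos, one_mul]; exact le_of_lt hκns
        have hκpos : 0 < κ := lt_of_le_of_lt hns0 hκns
        rw [hmax, hcval]; field_simp; ring
  -- ∑ v² ≤ 1
  have hv : ∑ h, (v h)^2 ≤ 1 := by
    simp only [hv_def, div_pow]
    rcases lt_or_eq_of_le hns0 with hnspos | hns0'
    · have hmaxpos : 0 < max ns κ := lt_of_lt_of_le hnspos (le_max_left _ _)
      rw [← Finset.sum_div, ← hnssq, div_le_one (by positivity)]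
      calc ns^2 ≤ (max ns κ)^2 := by
            apply pow_le_pow_left₀ hns0 (le_max_left _ _)
      _ = (max ns κ)^2 := rfl
    · have : ∀ h, s h = 0 := hszero hns0'.symm
      simp [this]
  -- hux
  have hux : τ * ∑ h, u h * (c * s h) = τ * ∑ h, |c * s h| := by
    by_cases h0 : τ = 0
    · rw [h0]; ring
    · congr 1
      refine Finset.sum_congr rfl fun h _ => ?_
      by_cases hsh : s h = 0
      · rw [hsh]; simp
      · have hylt : τ < |y h| := sfn_ne_zero y τ h hsh
        have hy0 : y h ≠ 0 := by intro h0'; rw [h0'] at hylt; simp at hylt; linarith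
        have husign : u h = Real.sign (y h) := by
          simp only [hu_def, if_neg h0]
          rw [y_sub_s y τ hτ h, if_pos hylt]
          field_simp
        have hsval : s h = (|y h| - τ) * Real.sign (y h) := by
          simp only [hs, sfn]; rw [max_eq_left (by linarith)]
        rw [husign, hsval, abs_mul, abs_mul, abs_of_nonneg hc0,
          abs_of_nonneg (by linarith : (0:ℝ) ≤ |y h| - τ),
          (sign_helpers hy0).1]
        linear_combination (c * (|y h| - τ)) * (sign_helpers hy0).2
  -- hvx
  have hvx : κ * ∑ h, v h * (c * s h) = κ * Real.sqrt (∑ h, (c * s h)^2) := by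
    have hrhs : Real.sqrt (∑ h, (c * s h)^2) = c * ns := by
      have : ∑ h, (c * s h)^2 = c^2 * ∑ h, (s h)^2 := by
        rw [Finset.mul_sum]; exact Finset.sum_congr rfl fun h _ => by ring
      rw [this, Real.sqrt_mul (sq_nonneg _), Real.sqrt_sq hc0, hns]
    rw [hrhs]
    have hlhs : ∑ h, v h * (c * s h) = c * (∑ h, (s h)^2) / max ns κ := by
      simp only [hv_def]
      rw [Finset.mul_sum, Finset.sum_div]
      exact Finset.sum_congr rfl fun h _ => by ring
    rw [hlhs, ← hnssq]
    rcases lt_or_eq_of_le hns0 with hnspos | hns0'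
    · by_cases hκns : κ ≤ ns
      · rw [max_eq_left hκns]; field_simp
      · push_neg at hκns
        have hcval : c = 0 := by
          rw [hc]; apply max_eq_right
          rw [sub_nonpos, le_div_iff₀ hnspos, one_mul]; exact le_of_lt hκns
        rw [hcval]; simp
    · rw [← hns0']; simp
  rw [hxs]
  exact fib_gap y (fun h => c * s h) u v τ κ hτ hκ hu hv hux hvx hy x

lemma sfn_zero {H : ℕ} (y : Fin H → ℝ) (h : Fin H) : sfn H y 0 h = y h := by
  unfold sfn
  rw [sub_zero, max_eq_left (abs_nonneg _)]
  rcases lt_trichotomy (y h) 0 with hlt | heq | hgt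
  · rw [Real.sign_of_neg hlt, abs_of_neg hlt]; ring
  · rw [heq]; simp
  · rw [Real.sign_of_pos hgt, abs_of_pos hgt]; ring

lemma solu_diag {H : ℕ} (y : Fin H → ℝ) (h : Fin H) : solu H y 0 0 h = y h := by
  unfold solu
  rw [zero_div, sub_zero, max_eq_left (by norm_num), one_mul, sfn_zero]

theorem stmt_8 (H p : ℕ) (hH : 1 ≤ H) (hp : 1 ≤ p)
    (Γ : Fin H → Fin p → Fin p → ℝ) (α lam γ : ℝ)
    (hα : 0 ≤ α) (hlam : 0 ≤ lam) (hγ : 0 ≤ γ)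
    (F : (Fin H → Fin p → Fin p → ℝ) → ℝ)
    (hF : ∀ Ω : Fin H → Fin p → Fin p → ℝ,
      F Ω = (1 / 2) * (∑ h, ∑ j, ∑ k, (Ω h j k - Γ h j k) ^ 2)
          + α * lam * ∑ h, ∑ j, ∑ k ∈ Finset.univ.erase j, |Ω h j k|
          + α * γ * ∑ j, ∑ k ∈ Finset.univ.erase j, Real.sqrt (∑ h, (Ω h j k) ^ 2))
    (soft : Fin p → Fin p → Fin H → ℝ)
    (hsoft : ∀ j k h, soft j k h = max (|Γ h j k| - α * lam) 0 * Real.sign (Γ h j k)) :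
    ∃ Ωstar : Fin H → Fin p → Fin p → ℝ,
      (∀ Ω, F Ωstar ≤ F Ω) ∧
      (∀ Ω, (∀ Ω', F Ω ≤ F Ω') → Ω = Ωstar) ∧
      (∀ h j, Ωstar h j j = Γ h j j) ∧
      (∀ j k, j ≠ k → soft j k ≠ 0 → ∀ h,
        Ωstar h j k
          = max (1 - α * γ / Real.sqrt (∑ i, (soft j k i) ^ 2)) 0 * soft j k h) ∧
      (∀ j k, j ≠ k → soft j k = 0 → ∀ h, Ωstar h j k = 0) := by
  set τf : Fin p → Fin p → ℝ := fun j k => if k = j then 0 else α * lam with hτf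
  set κf : Fin p → Fin p → ℝ := fun j k => if k = j then 0 else α * γ with hκf
  have hτf0 : ∀ j k, 0 ≤ τf j k := by
    intro j k; simp only [hτf]; split <;> positivity
  have hκf0 : ∀ j k, 0 ≤ κf j k := by
    intro j k; simp only [hκf]; split <;> positivity
  set Ωstar : Fin H → Fin p → Fin p → ℝ :=
    fun h j k => solu H (fun i => Γ i j k) (τf j k) (κf j k) h with hΩstar
  -- decomposition of F into fibers
  have comm3 : ∀ (f : Fin H → Fin p → Fin p → ℝ),
      ∑ h, ∑ j, ∑ k, f h j k = ∑ j, ∑ k, ∑ h, f h j k := by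
    intro f
    rw [Finset.sum_comm]
    exact Finset.sum_congr rfl fun j _ => Finset.sum_comm
  have hdecomp : ∀ Ω, F Ω
      = ∑ j, ∑ k, fibObj H (fun i => Γ i j k) (τf j k) (κf j k) (fun i => Ω i j k) := by
    intro Ω
    rw [hF Ω]
    have h1 : (1/2 : ℝ) * ∑ h, ∑ j, ∑ k, (Ω h j k - Γ h j k)^2
        = ∑ j, ∑ k, (1/2) * ∑ h, (Ω h j k - Γ h j k)^2 := by
      rw [comm3 (fun h j k => (Ω h j k - Γ h j k)^2), Finset.mul_sum]
      exact Finset.sum_congr rfl fun j _ => Finset.mul_sum _ _ _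
    have h2 : α * lam * ∑ h, ∑ j, ∑ k ∈ Finset.univ.erase j, |Ω h j k|
        = ∑ j, ∑ k, τf j k * ∑ h, |Ω h j k| := by
      rw [Finset.sum_comm (f := fun h j => ∑ k ∈ Finset.univ.erase j, |Ω h j k|),
        Finset.mul_sum]
      refine Finset.sum_congr rfl fun j _ => ?_
      rw [← Finset.sum_erase (Finset.univ)
          (f := fun k => τf j k * ∑ h, |Ω h j k|) (a := j) (by simp [hτf])]
      rw [Finset.sum_comm, Finset.mul_sum]
      refine Finset.sum_congr rfl fun k hk => ?_
      have hkj : k ≠ j := Finset.ne_of_mem_erase hk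
      simp only [hτf, if_neg hkj]
    have h3 : α * γ * ∑ j, ∑ k ∈ Finset.univ.erase j, Real.sqrt (∑ h, (Ω h j k)^2)
        = ∑ j, ∑ k, κf j k * Real.sqrt (∑ h, (Ω h j k)^2) := by
      rw [Finset.mul_sum]
      refine Finset.sum_congr rfl fun j _ => ?_
      rw [← Finset.sum_erase (Finset.univ)
          (f := fun k => κf j k * Real.sqrt (∑ h, (Ω h j k)^2)) (a := j) (by simp [hκf])]
      rw [Finset.mul_sum]
      refine Finset.sum_congr rfl fun k hk => ?_
      have hkj : k ≠ j := Finset.ne_of_mem_erase hk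
      simp only [hκf, if_neg hkj]
    rw [h1, h2, h3]
    unfold fibObj
    rw [← Finset.sum_add_distrib, ← Finset.sum_add_distrib]
    refine Finset.sum_congr rfl fun j _ => ?_
    rw [← Finset.sum_add_distrib, ← Finset.sum_add_distrib]
  -- key inequality
  have key : ∀ Ω, F Ωstar + (1/2) * ∑ j, ∑ k, ∑ h, (Ω h j k - Ωstar h j k)^2 ≤ F Ω := by
    intro Ω
    rw [hdecomp Ω, hdecomp Ωstar]
    have hfm : ∀ (j k : Fin p),
        fibObj H (fun i => Γ i j k) (τf j k) (κf j k) (fun i => Ωstar i j k)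
          + (1/2) * ∑ h, (Ω h j k - Ωstar h j k)^2
        ≤ fibObj H (fun i => Γ i j k) (τf j k) (κf j k) (fun i => Ω i j k) := by
      intro j k
      exact fiber_min (fun i => Γ i j k) (τf j k) (κf j k) (hτf0 j k) (hκf0 j k)
        (fun i => Ω i j k)
    calc ∑ j, ∑ k, fibObj H (fun i => Γ i j k) (τf j k) (κf j k) (fun i => Ωstar i j k)
          + (1/2) * ∑ j, ∑ k, ∑ h, (Ω h j k - Ωstar h j k)^2
        = ∑ j, ∑ k, (fibObj H (fun i => Γ i j k) (τf j k) (κf j k) (fun i => Ωstar i j k)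
            + (1/2) * ∑ h, (Ω h j k - Ωstar h j k)^2) := by
          rw [Finset.mul_sum, ← Finset.sum_add_distrib]
          refine Finset.sum_congr rfl fun j _ => ?_
          rw [Finset.mul_sum, ← Finset.sum_add_distrib]
      _ ≤ ∑ j, ∑ k, fibObj H (fun i => Γ i j k) (τf j k) (κf j k) (fun i => Ω i j k) :=
          Finset.sum_le_sum fun j _ => Finset.sum_le_sum fun k _ => hfm j k
  refine ⟨Ωstar, ?_, ?_, ?_, ?_, ?_⟩
  · intro Ω
    have h1 := key Ω
    have h2 : 0 ≤ (1/2) * ∑ j, ∑ k, ∑ h, (Ω h j k - Ωstar h j k)^2 := by positivity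
    linarith
  · intro Ω hmin
    have h1 := key Ω
    have h2 := hmin Ωstar
    have h3 : ∑ j, ∑ k, ∑ h, (Ω h j k - Ωstar h j k)^2 ≤ 0 := by linarith
    have h4 : ∑ j, ∑ k, ∑ h, (Ω h j k - Ωstar h j k)^2 = 0 :=
      le_antisymm h3 (by positivity)
    funext h j k
    have h5 := (Finset.sum_eq_zero_iff_of_nonneg
      (fun j _ => Finset.sum_nonneg fun k _ => Finset.sum_nonneg fun h _ => sq_nonneg _)).mp h4
      j (Finset.mem_univ j)
    have h6 := (Finset.sum_eq_zero_iff_of_nonneg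
      (fun k _ => Finset.sum_nonneg fun h _ => sq_nonneg _)).mp h5 k (Finset.mem_univ k)
    have h7 := (Finset.sum_eq_zero_iff_of_nonneg
      (fun h _ => sq_nonneg _)).mp h6 h (Finset.mem_univ h)
    have := pow_eq_zero_iff (n := 2) (by norm_num) |>.mp h7
    linarith [this]
  · intro h j
    simp only [hΩstar]
    have : τf j j = 0 ∧ κf j j = 0 := by simp [hτf, hκf]
    rw [this.1, this.2, solu_diag]
  · intro j k hjk _ h
    have hkj : k ≠ j := Ne.symm hjk
    simp only [hΩstar]
    have hτv : τf j k = α * lam := by simp [hτf, hkj]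
    have hκv : κf j k = α * γ := by simp [hκf, hkj]
    have hsf : sfn H (fun i => Γ i j k) (α * lam) = soft j k := by
      funext i; rw [hsoft j k i]; rfl
    rw [hτv, hκv]
    unfold solu
    rw [hsf]
  · intro j k hjk hz h
    have hkj : k ≠ j := Ne.symm hjk
    simp only [hΩstar]
    have hτv : τf j k = α * lam := by simp [hτf, hkj]
    have hκv : κf j k = α * γ := by simp [hκf, hkj]
    have hsf : sfn H (fun i => Γ i j k) (α * lam) = soft j k := by
      funext i; rw [hsoft j k i]; rfl
    rw [hτv, hκv]
    unfold solu
    rw [hsf, hz]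
    simp
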